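/- Let n ≥ 2 and let the triangular array {t_{i,j}} lie in S^λ (type B_n). Then the sum of the leftmost entries of all rows satisfies Σ_{k=1}^{n} t_{k,n+1−k} ≤ n·(2λ_1 + 2λ_2 + ⋯ + 2λ_{n−1} + λ_n). -/

import Mathlib

open Finset

/-- The function `c` of the paper for type B_n:
`c(t_{i,j}) = ∑_{k=i}^n (t_{k,j} + t_{k,2n−j})` for `j < n`,
`c(t_{i,n}) = ∑_{k=i}^n t_{k,n}`, and
`c(t_{i,j}) = t_{i,j} + ∑_{k=i+1}^n (t_{k,2n−j} + t_{k,j})` for `j > n`. -/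
def cB (n : ℕ) (t : ℕ → ℕ → ℤ) (i j : ℕ) : ℤ :=
  if j < n then ∑ k ∈ Finset.Icc i n, (t k j + t k (2 * n - j))
  else if j = n then ∑ k ∈ Finset.Icc i n, t k n
  else t i j + ∑ k ∈ Finset.Icc (i + 1) n, (t k (2 * n - j) + t k j)

/-- Column partial sums over rows `i..n`. -/
def SSb (n : ℕ) (t : ℕ → ℕ → ℤ) (i j : ℕ) : ℤ := ∑ k ∈ Finset.Icc i n, t k j

/-- `AAb n t i jj m` : total of suffix entries (positions `l ≥ jj` of row `i`,
plus all of rows `> i`) lying in columns `m` or `2n−m` (those with simple index `m`). -/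
def AAb (n : ℕ) (t : ℕ → ℕ → ℤ) (i jj m : ℕ) : ℤ :=
  (if jj ≤ m then t i m else 0) +
    (if jj ≤ 2 * n - m ∧ m < n then t i (2 * n - m) else 0) +
    SSb n t (i + 1) m + (if m < n then SSb n t (i + 1) (2 * n - m) else 0)

/-- `m`-th coordinate (doubled) of `λ` minus the suffix contributions. -/
def nub (n : ℕ) (t : ℕ → ℕ → ℤ) (lam : ℕ → ℤ) (i jj m : ℕ) : ℤ :=
  ((∑ j ∈ Finset.Icc m (n - 1), 2 * lam j) + lam n)
    - 2 * AAb n t i jj m + 2 * AAb n t i jj (m - 1)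

lemma SSb_split (n : ℕ) (t : ℕ → ℕ → ℤ) (i j : ℕ) (h : i ≤ n) :
    SSb n t i j = t i j + SSb n t (i + 1) j := by
  unfold SSb
  rw [Finset.Icc_add_one_left_eq_Ioc]
  exact (Finset.add_sum_Ioc_eq_sum_Icc h).symm

lemma cB_low (n : ℕ) (t : ℕ → ℕ → ℤ) (i j : ℕ) (h : j < n) :
    cB n t i j = SSb n t i j + SSb n t i (2 * n - j) := by
  simp only [cB, if_pos h, SSb, Finset.sum_add_distrib]

lemma cB_mid (n : ℕ) (t : ℕ → ℕ → ℤ) (i : ℕ) :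
    cB n t i n = SSb n t i n := by
  simp [cB, SSb]

lemma cB_high (n : ℕ) (t : ℕ → ℕ → ℤ) (i j : ℕ) (h : n < j) :
    cB n t i j = t i j + (SSb n t (i + 1) (2 * n - j) + SSb n t (i + 1) j) := by
  simp only [cB, SSb, Finset.sum_add_distrib]
  rw [if_neg (by omega), if_neg (by omega)]

/-- Backward step of the suffix count, position `jj < n` (simple index `jj`). -/
lemma U1 (n : ℕ) (t : ℕ → ℕ → ℤ) (i jj m : ℕ) (h1 : 1 ≤ jj) (h2 : jj < n) (hm : m ≤ n) :
    AAb n t i jj m = AAb n t i (jj + 1) m + (if m = jj then t i jj else 0) := by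
  simp only [AAb]
  by_cases h : m = jj
  · subst h
    split_ifs <;> first | omega | ring1
  · split_ifs <;> first | omega | ring1

/-- Backward step at position `jj = n` (simple index `n`). -/
lemma U2 (n : ℕ) (t : ℕ → ℕ → ℤ) (i m : ℕ) (hn : 1 ≤ n) (hm : m ≤ n) :
    AAb n t i n m = AAb n t i (n + 1) m + (if m = n then t i n else 0) := by
  simp only [AAb]
  by_cases h : m = n
  · subst h
    split_ifs <;> first | omega | ring1
  · split_ifs <;> first | omega | ring1

/-- Backward step at position `jj > n` (simple index `2n − jj`). -/
lemma U3 (n : ℕ) (t : ℕ → ℕ → ℤ) (i jj m : ℕ) (h1 : n < jj) (h2 : jj ≤ 2 * n - 1)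
    (hm : m ≤ n) :
    AAb n t i jj m = AAb n t i (jj + 1) m + (if m = 2 * n - jj then t i jj else 0) := by
  simp only [AAb]
  by_cases h : m = 2 * n - jj
  · subst h
    rw [show 2 * n - (2 * n - jj) = jj from by omega]
    split_ifs <;> first | omega | ring1
  · split_ifs <;> first | omega | ring1

/-- Pairing identity for the first family of inequalities (`jj < n`). -/
lemma P1 (n : ℕ) (t : ℕ → ℕ → ℤ) (lam : ℕ → ℤ) (i jj : ℕ)
    (hi : i ≤ n) (h1 : 1 ≤ jj) (h2 : jj < n) :
    nub n t lam i (jj + 1) jj - nub n t lam i (jj + 1) (jj + 1)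
      = 2 * (lam jj + cB n t i (jj + 1) - 2 * cB n t i (2 * n - jj)
          + cB n t i (2 * n + 1 - jj)) := by
  have e0 : (∑ j ∈ Icc jj (n - 1), 2 * lam j)
      = 2 * lam jj + ∑ j ∈ Icc (jj + 1) (n - 1), 2 * lam j := by
    rw [Finset.Icc_add_one_left_eq_Ioc]
    exact (Finset.add_sum_Ioc_eq_sum_Icc (by omega)).symm
  have eAprev : AAb n t i (jj + 1) (jj - 1) = cB n t i (2 * n + 1 - jj) := by
    rw [cB_high n t i _ (by omega)]
    simp only [AAb]
    rw [show 2 * n - (jj - 1) = 2 * n + 1 - jj from by omega,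
      show 2 * n - (2 * n + 1 - jj) = jj - 1 from by omega]
    split_ifs <;> omega
  have eAj : AAb n t i (jj + 1) jj = cB n t i (2 * n - jj) := by
    rw [cB_high n t i _ (by omega)]
    simp only [AAb]
    rw [show 2 * n - (2 * n - jj) = jj from by omega]
    split_ifs <;> omega
  have eAnext : AAb n t i (jj + 1) (jj + 1) = cB n t i (jj + 1) := by
    by_cases hc : jj + 1 < n
    · rw [cB_low n t i _ hc, SSb_split n t i (jj + 1) hi,
        SSb_split n t i (2 * n - (jj + 1)) hi]
      simp only [AAb]
      split_ifs <;> omega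
    · have hc' : jj + 1 = n := by omega
      rw [hc', cB_mid, SSb_split n t i n hi]
      simp only [AAb]
      split_ifs <;> omega
  simp only [nub, Nat.add_sub_cancel]
  rw [e0, eAprev, eAj, eAnext]
  ring

/-- Pairing identity for the middle inequality (`jj = n`). -/
lemma P2 (n : ℕ) (t : ℕ → ℕ → ℤ) (lam : ℕ → ℤ) (i : ℕ) (hi : i ≤ n) (hn : 1 ≤ n) :
    nub n t lam i (n + 1) n
      = lam n + 2 * cB n t i (n + 1) - 2 * cB n t (i + 1) n := by
  have eAn : AAb n t i (n + 1) n = cB n t (i + 1) n := by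
    rw [cB_mid]
    simp only [AAb]
    split_ifs <;> omega
  have eAn1 : AAb n t i (n + 1) (n - 1) = cB n t i (n + 1) := by
    rw [cB_high n t i _ (by omega)]
    simp only [AAb]
    rw [show 2 * n - (n - 1) = n + 1 from by omega,
      show 2 * n - (n + 1) = n - 1 from by omega]
    split_ifs <;> omega
  simp only [nub]
  rw [eAn, eAn1, show Icc n (n - 1) = (∅ : Finset ℕ) from Finset.Icc_eq_empty (by omega),
    Finset.sum_empty]
  ring

/-- Pairing identity for the second family of inequalities (position `2n − j`, `j < n`). -/
lemma P3 (n : ℕ) (t : ℕ → ℕ → ℤ) (lam : ℕ → ℤ) (i j : ℕ)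
    (hi : i ≤ n) (h1 : 1 ≤ j) (h2 : j < n) :
    nub n t lam i (2 * n + 1 - j) j - nub n t lam i (2 * n + 1 - j) (j + 1)
      = 2 * (lam j + cB n t (i + 1) (j + 1) - 2 * cB n t (i + 1) j
          + cB n t i (2 * n + 1 - j)) := by
  have e0 : (∑ jj ∈ Icc j (n - 1), 2 * lam jj)
      = 2 * lam j + ∑ jj ∈ Icc (j + 1) (n - 1), 2 * lam jj := by
    rw [Finset.Icc_add_one_left_eq_Ioc]
    exact (Finset.add_sum_Ioc_eq_sum_Icc (by omega)).symm
  have eAprev : AAb n t i (2 * n + 1 - j) (j - 1) = cB n t i (2 * n + 1 - j) := by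
    rw [cB_high n t i _ (by omega)]
    simp only [AAb]
    rw [show 2 * n - (j - 1) = 2 * n + 1 - j from by omega,
      show 2 * n - (2 * n + 1 - j) = j - 1 from by omega]
    split_ifs <;> omega
  have eAj : AAb n t i (2 * n + 1 - j) j = cB n t (i + 1) j := by
    rw [cB_low n t (i + 1) _ h2]
    simp only [AAb]
    split_ifs <;> omega
  have eAnext : AAb n t i (2 * n + 1 - j) (j + 1) = cB n t (i + 1) (j + 1) := by
    by_cases hc : j + 1 < n
    · rw [cB_low n t (i + 1) _ hc]
      simp only [AAb]
      split_ifs <;> omega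
    · have hc' : j + 1 = n := by omega
      rw [hc', cB_mid]
      simp only [AAb]
      split_ifs <;> omega
  simp only [nub, Nat.add_sub_cancel]
  rw [e0, eAprev, eAj, eAnext]
  ring

/-- Row transition: the suffix starting at the (virtual) position `n+i` of row `i`
equals the suffix starting at the leftmost position of row `i+1`. -/
lemma RTb (n : ℕ) (t : ℕ → ℕ → ℤ)
    (hsupp : ∀ i j, ¬(1 ≤ i ∧ i ≤ n ∧ n + 1 - i ≤ j ∧ j ≤ n - 1 + i) → t i j = 0)
    (i m : ℕ) (h1 : 1 ≤ i) (h2 : i + 1 ≤ n) (hm : m ≤ n) :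
    AAb n t i (n + i) m = AAb n t (i + 1) (n - i) m := by
  have hta : ∀ l, n - 1 + i < l → t i l = 0 := fun l hl => hsupp i l (by omega)
  have htb : ∀ l, l < n - i → t (i + 1) l = 0 := fun l hl => hsupp (i + 1) l (by omega)
  simp only [AAb]
  rw [SSb_split n t (i + 1) m h2, SSb_split n t (i + 1) (2 * n - m) h2]
  rw [if_neg (show ¬ (n + i ≤ m) from by omega)]
  by_cases hm2 : m < n
  · rw [if_pos (show n - i ≤ 2 * n - m ∧ m < n from ⟨by omega, hm2⟩),
      if_pos hm2, if_pos hm2]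
    have e2 : (if n + i ≤ 2 * n - m ∧ m < n then t i (2 * n - m) else 0) = 0 := by
      split_ifs with hc
      · exact hta _ (by omega)
      · rfl
    rw [e2]
    by_cases hd : n - i ≤ m
    · rw [if_pos hd]; ring
    · rw [if_neg hd, htb m (by omega)]; ring
  · rw [if_neg (show ¬ (n + i ≤ 2 * n - m ∧ m < n) from by omega),
      if_neg (show ¬ (n - i ≤ 2 * n - m ∧ m < n) from by omega),
      if_neg hm2, if_neg hm2, if_pos (show n - i ≤ m from by omega)]
    ring

/-- Base case: the empty suffix. -/
lemma BASEb (n : ℕ) (t : ℕ → ℕ → ℤ)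
    (hsupp : ∀ i j, ¬(1 ≤ i ∧ i ≤ n ∧ n + 1 - i ≤ j ∧ j ≤ n - 1 + i) → t i j = 0)
    (m : ℕ) (hn : 1 ≤ n) (hm : m ≤ n) :
    AAb n t n (2 * n) m = 0 := by
  have e : Finset.Icc (n + 1) n = (∅ : Finset ℕ) := Finset.Icc_eq_empty (by omega)
  simp only [AAb, SSb, e, Finset.sum_empty]
  rw [if_neg (show ¬ (2 * n ≤ m) from by omega)]
  have e2 : (if 2 * n ≤ 2 * n - m ∧ m < n then t n (2 * n - m) else 0) = 0 := by
    split_ifs with hc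
    · rw [show 2 * n - m = 2 * n from by omega]
      exact hsupp n (2 * n) (by omega)
    · rfl
  rw [e2]
  split_ifs <;> ring

/-- Type B_n case of Proposition 3.6: for a triangular array `t` in `S^λ`
(type B_n), the sum of the leftmost entries of all rows is bounded by
`n * (2λ_1 + ⋯ + 2λ_{n−1} + λ_n)`. -/
theorem adapted_string_leftmost_sum_bound_typeB
    (n : ℕ) (hn : 2 ≤ n) (lam : ℕ → ℤ) (t : ℕ → ℕ → ℤ)
    (hlam : ∀ j, 1 ≤ j → j ≤ n → 0 ≤ lam j)
    (ht : ∀ i j, 0 ≤ t i j)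
    (hsupp : ∀ i j, ¬(1 ≤ i ∧ i ≤ n ∧ n + 1 - i ≤ j ∧ j ≤ n - 1 + i) → t i j = 0)
    (hmono₁ : ∀ i j, 1 ≤ i → i ≤ n → n + 1 - i ≤ j → j + 1 ≤ n - 1 →
      2 * t i (j + 1) ≤ 2 * t i j)
    (hmono₂ : ∀ i, 2 ≤ i → i ≤ n → t i n ≤ 2 * t i (n - 1))
    (hmono₃ : ∀ i, 2 ≤ i → i ≤ n → 2 * t i (n + 1) ≤ t i n)
    (hmono₄ : ∀ i j, 1 ≤ i → i ≤ n → n + 1 ≤ j → j + 1 ≤ n - 1 + i →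
      2 * t i (j + 1) ≤ 2 * t i j)
    (hineq₁ : ∀ i j, 1 ≤ i → i ≤ n → n + 1 - i ≤ j → j < n →
      t i j ≤ lam j + cB n t i (j + 1) - 2 * cB n t i (2 * n - j)
        + cB n t i (2 * n + 1 - j))
    (hineq₂ : ∀ i j, 1 ≤ i → i ≤ n → n + 1 - i ≤ j → j < n →
      t i (2 * n - j) ≤ lam j + cB n t (i + 1) (j + 1) - 2 * cB n t (i + 1) j
        + cB n t i (2 * n + 1 - j))
    (hineq₃ : ∀ i, 1 ≤ i → i ≤ n →
      t i n ≤ lam n + 2 * cB n t i (n + 1) - 2 * cB n t (i + 1) n) :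
    (∑ k ∈ Icc 1 n, t k (n + 1 - k)) ≤
      (n : ℤ) * ((∑ j ∈ Icc 1 (n - 1), 2 * lam j) + lam n) := by
  set L : ℤ := (∑ j ∈ Icc 1 (n - 1), 2 * lam j) + lam n with hLdef
  -- The key backward step along a row.
  have step : ∀ i jj, 1 ≤ i → i ≤ n → n + 1 - i ≤ jj → jj ≤ n - 1 + i →
      (∀ m, 1 ≤ m → m ≤ n → |nub n t lam i (jj + 1) m| ≤ L) →
      (∀ m, 1 ≤ m → m ≤ n → |nub n t lam i jj m| ≤ L) ∧ t i jj ≤ L := by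
    intro i jj hi1 hi2 hjj1 hjj2 hInv
    rcases lt_trichotomy jj n with hlt | heq | hgt
    · -- jj < n : simple index jj
      have hjj0 : 1 ≤ jj := by omega
      have key : 2 * t i jj ≤ nub n t lam i (jj + 1) jj - nub n t lam i (jj + 1) (jj + 1) := by
        rw [P1 n t lam i jj hi2 hjj0 hlt]
        have h := hineq₁ i jj hi1 hi2 hjj1 hlt
        linarith
      have hup : ∀ m, m ≤ n → nub n t lam i jj m
          = nub n t lam i (jj + 1) m + (if m = jj + 1 then 2 * t i jj else 0)
            - (if m = jj then 2 * t i jj else 0) := by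
        intro m hm
        simp only [nub]
        rw [U1 n t i jj m hjj0 hlt hm, U1 n t i jj (m - 1) hjj0 hlt (by omega)]
        split_ifs <;> first | omega | ring1
      have h1 := abs_le.mp (hInv jj (by omega) (by omega))
      have h2 := abs_le.mp (hInv (jj + 1) (by omega) (by omega))
      have hb : t i jj ≤ L := by linarith
      refine ⟨?_, hb⟩
      intro m hm1 hm2
      rw [hup m hm2]
      by_cases hc : m = jj + 1
      · rw [if_pos hc, if_neg (by omega), hc, abs_le]
        constructor <;> linarith [ht i jj]
      · rw [if_neg hc]
        by_cases hd : m = jj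
        · rw [if_pos hd, hd, abs_le]
          constructor <;> linarith [ht i jj]
        · rw [if_neg hd]
          simpa using hInv m hm1 hm2
    · -- jj = n : simple index n
      rw [heq]
      have key : t i n ≤ nub n t lam i (n + 1) n := by
        rw [P2 n t lam i hi2 (by omega)]
        exact hineq₃ i hi1 hi2
      have hup : ∀ m, m ≤ n → nub n t lam i n m
          = nub n t lam i (n + 1) m - (if m = n then 2 * t i n else 0) := by
        intro m hm
        simp only [nub]
        rw [U2 n t i m (by omega) hm, U2 n t i (m - 1) (by omega) (by omega)]
        split_ifs <;> first | omega | ring1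
      rw [heq] at hInv
      have h1 := abs_le.mp (hInv n (by omega) le_rfl)
      have hb : t i n ≤ L := by linarith
      refine ⟨?_, hb⟩
      intro m hm1 hm2
      rw [hup m hm2]
      by_cases hd : m = n
      · rw [if_pos hd, hd, abs_le]
        constructor <;> linarith [ht i n]
      · rw [if_neg hd]
        simpa using hInv m hm1 hm2
    · -- jj > n : simple index 2n − jj
      have hj1 : 1 ≤ 2 * n - jj := by omega
      have hj2 : 2 * n - jj < n := by omega
      have hji : n + 1 - i ≤ 2 * n - jj := by omega
      have key : 2 * t i jj ≤ nub n t lam i (jj + 1) (2 * n - jj)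
          - nub n t lam i (jj + 1) (2 * n - jj + 1) := by
        have hP := P3 n t lam i (2 * n - jj) hi2 hj1 hj2
        have h := hineq₂ i (2 * n - jj) hi1 hi2 hji hj2
        rw [show 2 * n + 1 - (2 * n - jj) = jj + 1 from by omega] at hP h
        rw [show 2 * n - (2 * n - jj) = jj from by omega] at h
        linarith
      have hup : ∀ m, m ≤ n → nub n t lam i jj m
          = nub n t lam i (jj + 1) m + (if m = 2 * n - jj + 1 then 2 * t i jj else 0)
            - (if m = 2 * n - jj then 2 * t i jj else 0) := by
        intro m hm
        simp only [nub]
        rw [U3 n t i jj m hgt (by omega) hm, U3 n t i jj (m - 1) hgt (by omega) (by omega)]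
        split_ifs <;> first | omega | ring1
      have h1 := abs_le.mp (hInv (2 * n - jj) (by omega) (by omega))
      have h2 := abs_le.mp (hInv (2 * n - jj + 1) (by omega) (by omega))
      have hb : t i jj ≤ L := by linarith
      refine ⟨?_, hb⟩
      intro m hm1 hm2
      rw [hup m hm2]
      by_cases hc : m = 2 * n - jj + 1
      · rw [if_pos hc, if_neg (by omega), hc, abs_le]
        constructor <;> linarith [ht i jj]
      · rw [if_neg hc]
        by_cases hd : m = 2 * n - jj
        · rw [if_pos hd, hd, abs_le]
          constructor <;> linarith [ht i jj]
        · rw [if_neg hd]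
          simpa using hInv m hm1 hm2
  -- Iterating the step within a row.
  have inner : ∀ i, 1 ≤ i → i ≤ n →
      (∀ m, 1 ≤ m → m ≤ n → |nub n t lam i (n + i) m| ≤ L) →
      ∀ e, e ≤ 2 * i - 1 →
      (∀ m, 1 ≤ m → m ≤ n → |nub n t lam i (n + i - e) m| ≤ L) := by
    intro i hi1 hi2 hstart e
    induction e with
    | zero => intro _; simpa using hstart
    | succ e ih =>
      intro he
      have hprev := ih (by omega)
      have := step i (n + i - (e + 1)) hi1 hi2 (by omega) (by omega)
        (by rw [show n + i - (e + 1) + 1 = n + i - e from by omega]; exact hprev)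
      exact this.1
  -- The start-of-row invariant, by downward induction on rows.
  have rowstart : ∀ d, d ≤ n - 1 →
      (∀ m, 1 ≤ m → m ≤ n → |nub n t lam (n - d) (n + (n - d)) m| ≤ L) := by
    intro d
    induction d with
    | zero =>
      intro _ m hm1 hm2
      rw [show n - 0 = n from rfl, show n + n = 2 * n from by ring]
      rw [nub, BASEb n t hsupp m (by omega) hm2, BASEb n t hsupp (m - 1) (by omega) (by omega)]
      have hnn : (0 : ℤ) ≤ ∑ j ∈ Icc m (n - 1), 2 * lam j := by
        refine Finset.sum_nonneg fun j hj => ?_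
        have hj' := Finset.mem_Icc.mp hj
        have := hlam j (by omega) (by omega)
        linarith
      have hsub : (∑ j ∈ Icc m (n - 1), 2 * lam j) ≤ ∑ j ∈ Icc 1 (n - 1), 2 * lam j := by
        refine Finset.sum_le_sum_of_subset_of_nonneg (Finset.Icc_subset_Icc_left (by omega))
          fun j hj _ => ?_
        have hj' := Finset.mem_Icc.mp hj
        have := hlam j (by omega) (by omega)
        linarith
      have hlamn := hlam n (by omega) le_rfl
      rw [abs_le]
      constructor <;> [linarith; linarith]
    | succ d ihd =>
      intro hd
      have hprev := ihd (by omega)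
      have hrowend := inner (n - d) (by omega) (by omega) hprev (2 * (n - d) - 1) le_rfl
      rw [show n + (n - d) - (2 * (n - d) - 1) = d + 1 from by omega] at hrowend
      intro m hm1 hm2
      have hone : nub n t lam (n - (d + 1)) (n + (n - (d + 1))) m = nub n t lam (n - d) (d + 1) m := by
        have r1 := RTb n t hsupp (n - (d + 1)) m (by omega) (by omega) hm2
        have r2 := RTb n t hsupp (n - (d + 1)) (m - 1) (by omega) (by omega) (by omega)
        rw [show n - (d + 1) + 1 = n - d from by omega,
          show n - (n - (d + 1)) = d + 1 from by omega] at r1 r2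
        simp only [nub]
        rw [r1, r2]
      rw [hone]
      exact hrowend m hm1 hm2
  -- Each leftmost entry is bounded by L.
  have leftb : ∀ i, 1 ≤ i → i ≤ n → t i (n + 1 - i) ≤ L := by
    intro i hi1 hi2
    have hstart := rowstart (n - i) (by omega)
    rw [show n - (n - i) = i from by omega] at hstart
    have hmid := inner i hi1 hi2 hstart (2 * i - 2) (by omega)
    refine (step i (n + 1 - i) hi1 hi2 le_rfl (by omega) ?_).2
    rw [show n + 1 - i + 1 = n + i - (2 * i - 2) from by omega]
    exact hmid
  -- Summing up.
  calc (∑ k ∈ Icc 1 n, t k (n + 1 - k)) ≤ ∑ _k ∈ Icc 1 n, L :=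
        Finset.sum_le_sum fun k hk =>
          leftb k (Finset.mem_Icc.mp hk).1 (Finset.mem_Icc.mp hk).2
    _ = (n : ℤ) * L := by
        rw [Finset.sum_const, Nat.card_Icc, show n + 1 - 1 = n from by omega, nsmul_eq_mul]
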